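/- In a rigid abelian symmetric monoidal category A, the unit object 1 is Noetherian (as an object of A) if and only if the commutative ring End(1) is Noetherian. -/

import Mathlib

open CategoryTheory CategoryTheory.Limits CategoryTheory.MonoidalCategory

set_option linter.unusedSectionVars false

namespace UnitNoetherianAux

variable {A : Type*} [Category A] [Abelian A]
    [MonoidalCategory A] [SymmetricCategory A] [MonoidalPreadditive A]
    [RigidCategory A]

/-- Endomorphisms of the unit object commute (Eckmann–Hilton). -/
theorem unit_end_comm (f g : End (𝟙_ A)) : f ≫ g = g ≫ f := by
  have h := whisker_exchange (C := A) f g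
  have hlr : (λ_ (𝟙_ A)) = (ρ_ (𝟙_ A)) := Iso.ext unitors_equal
  rw [MonoidalCategory.id_whiskerLeft, MonoidalCategory.whiskerRight_id, hlr] at h
  simp only [Category.assoc, Iso.inv_hom_id_assoc] at h
  have h2 := congrArg (fun x => (ρ_ (𝟙_ A)).inv ≫ x ≫ (ρ_ (𝟙_ A)).hom) h
  simpa using h2.symm

section Split

variable {T : A} (t : T ⟶ 𝟙_ A) [Mono t]

private theorem whiskerLeft_cok_zero : (cokernel t) ◁ t = 0 := by
  have hepi : Epi ((cokernel.π t) ▷ T) := by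
    haveI : Functor.PreservesEpimorphisms (tensorRight T) :=
      Functor.preservesEpimorphisms_of_adjunction (tensorRightAdjunction T (Tᘁ))
    simpa using (tensorRight T).map_epi (cokernel.π t)
  apply zero_of_epi_comp ((cokernel.π t) ▷ T)
  rw [← whisker_exchange]
  have hlr : (λ_ (𝟙_ A)) = (ρ_ (𝟙_ A)) := Iso.ext unitors_equal
  rw [MonoidalCategory.id_whiskerLeft, MonoidalCategory.whiskerRight_id, hlr]
  simp [cokernel.condition_assoc]

private theorem isZero_cok_tensor : IsZero ((cokernel t) ⊗ T) := by
  haveI : Functor.PreservesMonomorphisms (tensorLeft (cokernel t)) :=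
    Functor.preservesMonomorphisms_of_adjunction
      (tensorLeftAdjunction (cokernel t) ((cokernel t)ᘁ))
  haveI : Mono ((cokernel t) ◁ t) := by
    simpa using (tensorLeft (cokernel t)).map_mono t
  exact IsZero.of_mono_eq_zero _ (whiskerLeft_cok_zero t)

private theorem isIso_whiskerRight_t : IsIso (t ▷ T) := by
  haveI : Functor.PreservesMonomorphisms (tensorRight T) :=
    Functor.preservesMonomorphisms_of_adjunction (tensorRightAdjunction (ᘁT) T)
  haveI : PreservesColimitsOfSize.{0, 0} (tensorRight T) :=
    (tensorRightAdjunction T (Tᘁ)).leftAdjoint_preservesColimits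
  have h1 : IsZero ((tensorRight T).obj (cokernel t)) := by
    simpa using isZero_cok_tensor t
  haveI : Epi ((tensorRight T).map t) :=
    Preadditive.epi_of_isZero_cokernel _
      (h1.of_iso (PreservesCokernel.iso (tensorRight T) t).symm)
  have : IsIso ((tensorRight T).map t) := isIso_of_mono_of_epi _
  simpa using this

private theorem isIso_whiskerLeft_t : IsIso (T ◁ t) := by
  haveI := isIso_whiskerRight_t t
  have hn := BraidedCategory.braiding_naturality_right T (Z := 𝟙_ A) t
  have h : T ◁ t = (β_ T T).hom ≫ (t ▷ T) ≫ (β_ T (𝟙_ A)).inv := by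
    calc T ◁ t = (T ◁ t ≫ (β_ T (𝟙_ A)).hom) ≫ (β_ T (𝟙_ A)).inv := by simp
      _ = ((β_ T T).hom ≫ (t ▷ T)) ≫ (β_ T (𝟙_ A)).inv := by rw [hn]
      _ = (β_ T T).hom ≫ (t ▷ T) ≫ (β_ T (𝟙_ A)).inv := by simp only [Category.assoc]
  rw [h]
  infer_instance

/-- Any morphism `X ⊗ T ⟶ cokernel t` is zero. -/
private theorem hom_tensor_to_cok_zero (X : A) (g : X ⊗ T ⟶ cokernel t) : g = 0 := by
  have nat : (g ▷ T) ≫ ((cokernel t) ◁ t) ≫ (ρ_ (cokernel t)).hom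
      = ((X ⊗ T) ◁ t) ≫ (ρ_ (X ⊗ T)).hom ≫ g := by
    rw [← whisker_exchange_assoc, MonoidalCategory.rightUnitor_naturality]
  rw [whiskerLeft_cok_zero t] at nat
  simp only [zero_comp, comp_zero] at nat
  haveI : IsIso ((X ⊗ T) ◁ t) := by
    haveI := isIso_whiskerLeft_t t
    haveI : IsIso (X ◁ (T ◁ t)) := by
      have : IsIso ((tensorLeft X).map (T ◁ t)) := inferInstance
      simpa using this
    have h : (X ⊗ T) ◁ t
        = (α_ X T T).hom ≫ (X ◁ (T ◁ t)) ≫ (α_ X T (𝟙_ A)).inv := by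
      rw [← cancel_mono (α_ X T (𝟙_ A)).hom]
      simp [associator_naturality_right]
    rw [h]
    infer_instance
  have h5 : (ρ_ (X ⊗ T)).hom ≫ g = 0 := by
    have h4 : ((X ⊗ T) ◁ t) ≫ (ρ_ (X ⊗ T)).hom ≫ g = ((X ⊗ T) ◁ t) ≫ 0 := by
      rw [comp_zero]
      exact nat.symm
    exact (cancel_epi _).mp h4
  rw [← Category.id_comp g, ← (ρ_ (X ⊗ T)).inv_hom_id, Category.assoc, h5, comp_zero]

private theorem isZero_cok_tensor_dual : IsZero ((cokernel t) ⊗ (Tᘁ)) := by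
  rw [IsZero.iff_id_eq_zero]
  have h0 : (tensorRightHomEquiv ((cokernel t) ⊗ (Tᘁ)) T (Tᘁ) (cokernel t)).symm (𝟙 _) = 0 :=
    hom_tensor_to_cok_zero t _ _
  have h1 : 𝟙 ((cokernel t) ⊗ (Tᘁ))
      = (tensorRightHomEquiv ((cokernel t) ⊗ (Tᘁ)) T (Tᘁ) (cokernel t)) 0 := by
    rw [← h0, Equiv.apply_symm_apply]
  rw [h1]
  simp [tensorRightHomEquiv]

private theorem isZero_dual_tensor_cok : IsZero ((Tᘁ) ⊗ (cokernel t)) :=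
  (isZero_cok_tensor_dual t).of_iso (β_ (Tᘁ) (cokernel t))

private theorem isIso_dual_whiskerLeft : IsIso ((Tᘁ) ◁ t) := by
  haveI : Functor.PreservesMonomorphisms (tensorLeft (Tᘁ)) :=
    Functor.preservesMonomorphisms_of_adjunction (tensorLeftAdjunction (Tᘁ) ((Tᘁ)ᘁ))
  haveI : PreservesColimitsOfSize.{0, 0} (tensorLeft (Tᘁ)) :=
    (tensorLeftAdjunction T (Tᘁ)).leftAdjoint_preservesColimits
  have h1 : IsZero ((tensorLeft (Tᘁ)).obj (cokernel t)) := by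
    simpa using isZero_dual_tensor_cok t
  haveI : Epi ((tensorLeft (Tᘁ)).map t) :=
    Preadditive.epi_of_isZero_cokernel _
      (h1.of_iso (PreservesCokernel.iso (tensorLeft (Tᘁ)) t).symm)
  have : IsIso ((tensorLeft (Tᘁ)).map t) := isIso_of_mono_of_epi _
  simpa using this

/-- Every monomorphism into the unit object of a rigid abelian category is split. -/
theorem isSplitMono_into_unit : IsSplitMono t := by
  haveI := isIso_dual_whiskerLeft t
  refine ⟨⟨⟨η_ T (Tᘁ) ≫ (T ◁ ((ρ_ (Tᘁ)).inv ≫ inv ((Tᘁ) ◁ t) ≫ ε_ T (Tᘁ))) ≫ (ρ_ T).hom,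
    ?_⟩⟩⟩
  have coh : η_ T (Tᘁ) ≫ (T ◁ (ρ_ (Tᘁ)).inv)
      = (λ_ (𝟙_ A)).inv ≫ ((η_ T (Tᘁ)) ▷ (𝟙_ A)) ≫ (α_ T (Tᘁ) (𝟙_ A)).hom := by
    rw [MonoidalCategory.whiskerRight_id]
    have hlr : (λ_ (𝟙_ A)) = (ρ_ (𝟙_ A)) := Iso.ext unitors_equal
    rw [hlr]
    simp [whiskerLeft_rightUnitor_inv]
  have h1 : (λ_ T).inv ≫ ((η_ T (Tᘁ)) ▷ T) ≫ (α_ T (Tᘁ) T).hom ≫ (T ◁ ((Tᘁ) ◁ t))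
      = t ≫ η_ T (Tᘁ) ≫ (T ◁ (ρ_ (Tᘁ)).inv) := by
    calc (λ_ T).inv ≫ ((η_ T (Tᘁ)) ▷ T) ≫ (α_ T (Tᘁ) T).hom ≫ (T ◁ ((Tᘁ) ◁ t))
        = (λ_ T).inv ≫ ((η_ T (Tᘁ)) ▷ T) ≫ ((T ⊗ (Tᘁ)) ◁ t) ≫ (α_ T (Tᘁ) (𝟙_ A)).hom := by
          rw [← associator_naturality_right]
      _ = (λ_ T).inv ≫ ((𝟙_ A) ◁ t) ≫ ((η_ T (Tᘁ)) ▷ (𝟙_ A)) ≫ (α_ T (Tᘁ) (𝟙_ A)).hom := by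
          rw [← whisker_exchange_assoc]
      _ = t ≫ (λ_ (𝟙_ A)).inv ≫ ((η_ T (Tᘁ)) ▷ (𝟙_ A)) ≫ (α_ T (Tᘁ) (𝟙_ A)).hom := by
          rw [MonoidalCategory.id_whiskerLeft]
          simp only [Category.assoc, Iso.inv_hom_id_assoc]
      _ = t ≫ η_ T (Tᘁ) ≫ (T ◁ (ρ_ (Tᘁ)).inv) := by rw [← coh]
  have key : t ≫ η_ T (Tᘁ) ≫ (T ◁ (ρ_ (Tᘁ)).inv) ≫ (T ◁ inv ((Tᘁ) ◁ t))
      = (λ_ T).inv ≫ ((η_ T (Tᘁ)) ▷ T) ≫ (α_ T (Tᘁ) T).hom := by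
    have h2 := congrArg (fun x => x ≫ (T ◁ inv ((Tᘁ) ◁ t))) h1
    simp only [Category.assoc] at h2
    rw [← h2]
    simp only [← MonoidalCategory.whiskerLeft_comp, Category.assoc]
    rw [IsIso.hom_inv_id]
    simp
  calc t ≫ η_ T (Tᘁ) ≫ (T ◁ ((ρ_ (Tᘁ)).inv ≫ inv ((Tᘁ) ◁ t) ≫ ε_ T (Tᘁ))) ≫ (ρ_ T).hom
      = (t ≫ η_ T (Tᘁ) ≫ (T ◁ (ρ_ (Tᘁ)).inv) ≫ (T ◁ inv ((Tᘁ) ◁ t)))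
          ≫ (T ◁ ε_ T (Tᘁ)) ≫ (ρ_ T).hom := by
        simp only [MonoidalCategory.whiskerLeft_comp, Category.assoc]
    _ = (λ_ T).inv ≫ (((η_ T (Tᘁ)) ▷ T) ≫ (α_ T (Tᘁ) T).hom ≫ (T ◁ ε_ T (Tᘁ)))
          ≫ (ρ_ T).hom := by rw [key]; simp only [Category.assoc]
    _ = 𝟙 T := by
        rw [ExactPairing.evaluation_coevaluation]
        simp

end Split




theorem unit_end_mul_comm (f g : End (𝟙_ A)) : f * g = g * f := by
  show g ≫ f = f ≫ g
  exact unit_end_comm g f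

/-- The ideal of endomorphisms of the unit factoring through a subobject. -/
noncomputable def factorIdeal (S : Subobject (𝟙_ A)) : Ideal (End (𝟙_ A)) where
  carrier := {f | S.Factors f}
  add_mem' := fun hf hg => Subobject.factors_add _ _ hf hg
  zero_mem' := Subobject.factors_zero
  smul_mem' := fun r f hf => by
    have h1 : S.Factors (r ≫ f) := Subobject.factors_of_factors_right r hf
    have h2 : (r • f : End (𝟙_ A)) = r ≫ f := by
      rw [smul_eq_mul]
      show f ≫ r = r ≫ f
      exact unit_end_comm f r
    show S.Factors (r • f)
    rw [h2]
    exact h1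

theorem mem_factorIdeal {S : Subobject (𝟙_ A)} {f : End (𝟙_ A)} :
    f ∈ factorIdeal S ↔ S.Factors f := Iff.rfl

theorem factorIdeal_le_iff (S T : Subobject (𝟙_ A)) :
    S ≤ T ↔ factorIdeal S ≤ factorIdeal T := by
  constructor
  · intro h f hf
    exact Subobject.factors_of_le f h hf
  · intro h
    haveI := isSplitMono_into_unit S.arrow
    have he : S.Factors (retraction S.arrow ≫ S.arrow) :=
      Subobject.factors_comp_arrow _
    have hT : T.Factors (retraction S.arrow ≫ S.arrow) := h he
    refine Subobject.le_of_comm (S.arrow ≫ T.factorThru _ hT) ?_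
    rw [Category.assoc, Subobject.factorThru_arrow, ← Category.assoc, IsSplitMono.id,
      Category.id_comp]

/-- Direction 1: a Noetherian endomorphism ring gives a Noetherian unit object. -/
theorem noetherianObject_of_isNoetherianRing [IsNoetherianRing (End (𝟙_ A))] :
    IsNoetherianObject (𝟙_ A) := by
  haveI : WellFoundedGT (Ideal (End (𝟙_ A))) :=
    (inferInstance : IsNoetherian (End (𝟙_ A)) (End (𝟙_ A))).wellFoundedGT
  have hs : StrictMono (factorIdeal (A := A)) := by
    intro S T h
    refine lt_of_le_of_ne ((factorIdeal_le_iff S T).mp h.le) (fun he => ?_)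
    exact h.ne (le_antisymm h.le ((factorIdeal_le_iff T S).mpr he.ge))
  exact ⟨hs.wellFoundedGT⟩

/-- von Neumann regularity-type statement for `End (𝟙_ A)`. -/
theorem exists_idem_single (g : End (𝟙_ A)) :
    ∃ e : End (𝟙_ A), e ∈ Ideal.span {g} ∧ e * g = g := by
  haveI : Mono (kernel.ι g) := inferInstance
  haveI := isSplitMono_into_unit (kernel.ι g)
  haveI := isSplitMono_into_unit (Abelian.image.ι g)
  have hke : kernel.ι g ≫ (𝟙 (𝟙_ A) - retraction (kernel.ι g) ≫ kernel.ι g) = 0 := by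
    rw [Preadditive.comp_sub]
    rw [← Category.assoc, IsSplitMono.id, Category.id_comp, Category.comp_id, sub_self]
  let d : cokernel (kernel.ι g) ⟶ 𝟙_ A :=
    cokernel.desc (kernel.ι g) (𝟙 (𝟙_ A) - retraction (kernel.ι g) ≫ kernel.ι g) hke
  have hdg : d ≫ g = Abelian.coimageImageComparison g ≫ Abelian.image.ι g := by
    apply (cancel_epi (cokernel.π (kernel.ι g))).mp
    have h2 : cokernel.π (kernel.ι g) ≫ Abelian.coimageImageComparison g ≫ Abelian.image.ι g
        = g := Abelian.coimage_image_factorisation g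
    rw [h2, ← Category.assoc, cokernel.π_desc, Preadditive.sub_comp, Category.id_comp,
      Category.assoc, kernel.condition, comp_zero, sub_zero]
  refine ⟨retraction (Abelian.image.ι g) ≫ Abelian.image.ι g, ?_, ?_⟩
  · -- e = x * g with suitable x
    have hx : (retraction (Abelian.image.ι g) ≫ inv (Abelian.coimageImageComparison g) ≫ d) ≫ g
        = retraction (Abelian.image.ι g) ≫ Abelian.image.ι g := by
      rw [Category.assoc, Category.assoc, hdg, IsIso.inv_hom_id_assoc]
    refine Ideal.mem_span_singleton'.mpr
      ⟨(retraction (Abelian.image.ι g) ≫ inv (Abelian.coimageImageComparison g) ≫ d :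
          End (𝟙_ A)), ?_⟩
    show g ≫ (retraction (Abelian.image.ι g) ≫ inv (Abelian.coimageImageComparison g) ≫ d)
        = retraction (Abelian.image.ι g) ≫ Abelian.image.ι g
    rw [unit_end_comm]
    exact hx
  · show g ≫ (retraction (Abelian.image.ι g) ≫ Abelian.image.ι g) = g
    have h9 := Abelian.coimage_image_factorisation g
    have h10 : (Abelian.coimage.π g ≫ Abelian.coimageImageComparison g ≫ Abelian.image.ι g)
        ≫ (retraction (Abelian.image.ι g) ≫ Abelian.image.ι g)
        = Abelian.coimage.π g ≫ Abelian.coimageImageComparison g ≫ Abelian.image.ι g := by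
      simp only [Category.assoc]
      rw [← Category.assoc (Abelian.image.ι g), IsSplitMono.id, Category.id_comp]
    have h11 := congrArg
      (fun z => z ≫ (retraction (Abelian.image.ι g) ≫ Abelian.image.ι g)) h9
    rw [← h11, h10, h9]

theorem exists_idem_finset (s : Finset (End (𝟙_ A))) :
    ∃ E, E ∈ Ideal.span (s : Set (End (𝟙_ A))) ∧
      ∀ f ∈ Ideal.span (s : Set (End (𝟙_ A))), E * f = f := by
  classical
  induction s using Finset.induction_on with
  | empty =>
      refine ⟨0, Ideal.zero_mem _, fun f hf => ?_⟩
      simp only [Finset.coe_empty, Ideal.span_empty, Ideal.mem_bot] at hf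
      rw [hf, mul_zero]
  | @insert g s hgs ih =>
      obtain ⟨E, hEmem, hEprop⟩ := ih
      obtain ⟨e, hemem, heg⟩ := exists_idem_single (A := A) g
      have hespan : ∀ f ∈ Ideal.span ({g} : Set (End (𝟙_ A))), e * f = f := by
        intro f hf
        obtain ⟨r, hr⟩ := Ideal.mem_span_singleton'.mp hf
        rw [← hr, ← mul_assoc, unit_end_mul_comm e r, mul_assoc, heg]
      rw [Finset.coe_insert, Ideal.span_insert]
      have hEmem' : E ∈ Ideal.span ({g} : Set (End (𝟙_ A))) ⊔
          Ideal.span (s : Set (End (𝟙_ A))) := Ideal.mem_sup_right hEmem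
      have hemem' : e ∈ Ideal.span ({g} : Set (End (𝟙_ A))) ⊔
          Ideal.span (s : Set (End (𝟙_ A))) := Ideal.mem_sup_left hemem
      refine ⟨E + e - E * e, ?_, ?_⟩
      · exact Submodule.sub_mem _ (Submodule.add_mem _ hEmem' hemem')
          (Ideal.mul_mem_left _ _ hemem')
      · intro f hf
        obtain ⟨a, ha, b, hb, rfl⟩ := Submodule.mem_sup.mp hf
        have h1 : e * a = a := hespan a ha
        have h2 : E * b = b := hEprop b hb
        have h3 : (E * e) * a = E * a := by
          rw [mul_assoc, h1]
        have h4 : (E * e) * b = e * b := by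
          rw [unit_end_mul_comm E e, mul_assoc, h2]
        have expand : ∀ x : End (𝟙_ A),
            (E + e - E * e) * x = E * x + e * x - (E * e) * x := by
          intro x
          rw [sub_mul, add_mul]
        rw [expand, mul_add, mul_add, mul_add, h3, h4, h1, h2]
        abel

theorem exists_idem_of_fg (N : Ideal (End (𝟙_ A))) (h : N.FG) :
    ∃ E, E ∈ N ∧ ∀ f ∈ N, E * f = f := by
  obtain ⟨s, hs⟩ := h
  obtain ⟨E, h1, h2⟩ := exists_idem_finset (A := A) s
  rw [hs] at h1 h2
  exact ⟨E, h1, h2⟩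

/-- Coerce an endomorphism to a hom. -/
def toHom {X : A} (E : End X) : X ⟶ X := E

theorem comp_toHom_one_sub {X : A} (E : End X) {W : A} (u : W ⟶ X) (h : u ≫ toHom E = u) :
    u ≫ toHom (1 - E) = 0 := by
  have : toHom (1 - E) = 𝟙 X - toHom E := rfl
  rw [this, Preadditive.comp_sub, Category.comp_id, h, sub_self]

/-- Direction 2: a Noetherian unit object gives a Noetherian endomorphism ring. -/
theorem isNoetherianRing_of_noetherianObject [IsNoetherianObject (𝟙_ A)] :
    IsNoetherianRing (End (𝟙_ A)) := by
  rw [isNoetherianRing_iff, isNoetherian_iff_fg_wellFounded]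
  haveI : WellFoundedGT (Subobject (𝟙_ A)) :=
    inferInstance
  classical
  let idemOf : {N : Ideal (End (𝟙_ A)) // N.FG} → End (𝟙_ A) :=
    fun N => (exists_idem_of_fg N.1 N.2).choose
  have hmem : ∀ N, idemOf N ∈ N.1 := fun N => (exists_idem_of_fg N.1 N.2).choose_spec.1
  have hprop : ∀ N, ∀ f ∈ N.1, idemOf N * f = f :=
    fun N => (exists_idem_of_fg N.1 N.2).choose_spec.2
  let Θ : {N : Ideal (End (𝟙_ A)) // N.FG} → Subobject (𝟙_ A) :=
    fun N => Subobject.mk (kernel.ι (toHom (1 - idemOf N)))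
  have kerE : ∀ N, kernel.ι (toHom (1 - idemOf N)) ≫ toHom (idemOf N)
      = kernel.ι (toHom (1 - idemOf N)) := by
    intro N
    have hc := kernel.condition (toHom (1 - idemOf N))
    have hd : toHom (1 - idemOf N) = 𝟙 (𝟙_ A) - toHom (idemOf N) := rfl
    rw [hd, Preadditive.comp_sub, Category.comp_id, sub_eq_zero] at hc
    exact hc.symm
  have mulE : ∀ (N₁ N₂), idemOf N₂ * idemOf N₁ = idemOf N₁ →
      toHom (idemOf N₁) ≫ toHom (1 - idemOf N₂) = 0 := by
    intro N₁ N₂ h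
    refine comp_toHom_one_sub _ _ ?_
    show idemOf N₁ ≫ idemOf N₂ = idemOf N₁
    exact h
  have hΘmono : ∀ N₁ N₂, N₁ ≤ N₂ → Θ N₁ ≤ Θ N₂ := by
    intro N₁ N₂ h
    have h1 : idemOf N₂ * idemOf N₁ = idemOf N₁ := hprop N₂ _ (h (hmem N₁))
    have hk : kernel.ι (toHom (1 - idemOf N₁)) ≫ toHom (1 - idemOf N₂) = 0 := by
      rw [← kerE N₁, Category.assoc, mulE N₁ N₂ h1, comp_zero]
    exact Subobject.mk_le_mk_of_comm (kernel.lift _ _ hk) (kernel.lift_ι _ _ _)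
  have hΘ : StrictMono Θ := by
    intro N₁ N₂ h
    refine lt_of_le_of_ne (hΘmono N₁ N₂ h.le) (fun he => ?_)
    have hle : Θ N₂ ≤ Θ N₁ := he.ge
    have hm : Subobject.ofMkLEMk _ _ hle ≫ kernel.ι (toHom (1 - idemOf N₁))
        = kernel.ι (toHom (1 - idemOf N₂)) := Subobject.ofMkLEMk_comp hle
    have hE2E2 : toHom (idemOf N₂) ≫ toHom (1 - idemOf N₂) = 0 := by
      refine comp_toHom_one_sub _ _ ?_
      show idemOf N₂ ≫ idemOf N₂ = idemOf N₂
      show idemOf N₂ * idemOf N₂ = idemOf N₂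
      exact hprop N₂ _ (hmem N₂)
    have hw : kernel.lift _ _ hE2E2 ≫ kernel.ι (toHom (1 - idemOf N₂)) = toHom (idemOf N₂) :=
      kernel.lift_ι _ _ _
    have hE2 : toHom (idemOf N₂) ≫ toHom (idemOf N₁) = toHom (idemOf N₂) := by
      conv_lhs => rw [← hw, ← hm]
      rw [Category.assoc, Category.assoc, kerE N₁, hm, hw]
    have hE2N1 : idemOf N₂ ∈ N₁.1 := by
      have hin : idemOf N₂ * idemOf N₁ ∈ N₁.1 :=
        Ideal.mul_mem_left N₁.1 (idemOf N₂) (hmem N₁)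
      have heq : idemOf N₂ * idemOf N₁ = idemOf N₂ := by
        rw [unit_end_mul_comm]
        exact hE2
      rwa [heq] at hin
    have hcon : N₂.1 ≤ N₁.1 := by
      intro f hf
      have h1 : idemOf N₂ * f = f := hprop N₂ f hf
      have h2 : f * idemOf N₂ ∈ N₁.1 := Ideal.mul_mem_left _ _ hE2N1
      rw [unit_end_mul_comm f (idemOf N₂), h1] at h2
      exact h2
    exact absurd (le_antisymm h.le hcon) h.ne
  exact hΘ.wellFoundedGT

end UnitNoetherianAux

/-- In a rigid abelian symmetric monoidal category, the unit object is a Noetherian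
object if and only if the ring `End(1)` is Noetherian. -/
theorem unit_noetherianObject_iff_end_noetherian
    {A : Type*} [Category A] [Abelian A]
    [MonoidalCategory A] [SymmetricCategory A] [MonoidalPreadditive A]
    [RigidCategory A] :
    IsNoetherianObject (𝟙_ A) ↔ IsNoetherianRing (End (𝟙_ A)) := by
  constructor
  · intro h
    exact UnitNoetherianAux.isNoetherianRing_of_noetherianObject
  · intro h
    exact UnitNoetherianAux.noetherianObject_of_isNoetherianRing
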